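/- With the system (xⱼ; xⱼ*)_{j≥0} in c defined by x₀ ≡ 1, x₀* = Σ_k 2^{-k} δ_k, xⱼ = -e_j + Σ_{k>j} e_k, xⱼ* = -δ_j/2 + Σ_{k>j} 2^{j-k-1} δ_k: if y ∈ c satisfies xⱼ*(y) = 0 for all j ≥ 0, then y = 0. That is, the system is total. -/

import Mathlib

open scoped ENNReal
set_option synthInstance.maxHeartbeats 1000000
set_option maxHeartbeats 1000000

/-- The space of `X`-valued convergent sequences, as a subspace of `ℓ^∞(X)` (with the
sup norm). -/
noncomputable def cSubX (X : Type*) [NormedAddCommGroup X] [NormedSpace ℝ X] :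
    Submodule ℝ (lp (fun _ : ℕ => X) ∞) where
  carrier := {y | ∃ L : X, Filter.Tendsto (fun n => y n) Filter.atTop (nhds L)}
  zero_mem' := ⟨0, by simp⟩
  add_mem' := by
    rintro y z ⟨L1, h1⟩ ⟨L2, h2⟩
    refine ⟨L1 + L2, ?_⟩
    have := h1.add h2
    simpa [lp.coeFn_add] using this
  smul_mem' := by
    rintro c y ⟨L, h⟩
    refine ⟨c • L, ?_⟩
    have := h.const_smul c
    simpa [lp.coeFn_smul] using this

/-- The space `c` of convergent real sequences with the sup norm. -/
noncomputable abbrev cSub : Submodule ℝ (lp (fun _ : ℕ => ℝ) ∞) := cSubX ℝ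

/-- The coordinate functional `δ_k : y ↦ y_k` on `c`. -/
noncomputable def cCoord (k : ℕ) : cSub →L[ℝ] ℝ :=
  LinearMap.mkContinuous
    { toFun := fun y => (y : lp (fun _ : ℕ => ℝ) ∞) k
      map_add' := by intro y z; simp
      map_smul' := by intro c y; simp }
    1
    (fun y => by
      rw [one_mul]
      exact lp.norm_apply_le_norm ENNReal.top_ne_zero (y : lp (fun _ : ℕ => ℝ) ∞) k)

/-- `x_j`: for `j = 0` the constant sequence `1`; for `j ≥ 1` the sequence which is `0` on
(paper, `1`-based) coordinates `< j`, `-1` at coordinate `j` and `1` at coordinates `> j`.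
Entry `k` of the underlying function is the paper's coordinate `k + 1`. -/
noncomputable def cVec (j : ℕ) : cSub :=
  ⟨⟨fun k => if k + 1 < j then 0 else if k + 1 = j then -1 else 1, by
      apply memℓp_infty
      refine ⟨1, ?_⟩
      rintro r ⟨k, rfl⟩
      dsimp only
      split_ifs <;> simp⟩,
   ⟨1, by
      refine Filter.Tendsto.congr' ?_ tendsto_const_nhds
      filter_upwards [Filter.eventually_ge_atTop j] with k hk
      have h1 : ¬ (k + 1 < j) := by omega
      have h2 : ¬ (k + 1 = j) := by omega
      simp [h1, h2]⟩⟩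

/-- `x_j^*`: `x_0^* = ∑_{k ≥ 1} 2^{-k} δ_k`, and for `j ≥ 1`,
`x_j^* = -δ_j/2 + ∑_{k > j} 2^{j-k-1} δ_k` (again with the `1`-based coordinate `k`
corresponding to entry `k - 1` of the underlying function, so that `δ` of paper
coordinate `k` is `cCoord (k-1)`). -/
noncomputable def cVecStar (j : ℕ) : cSub →L[ℝ] ℝ :=
  if j = 0 then ∑' k : ℕ, ((1 : ℝ) / 2) ^ (k + 1) • cCoord k
  else (-(1 / 2 : ℝ)) • cCoord (j - 1) + ∑' i : ℕ, ((1 : ℝ) / 2) ^ (i + 2) • cCoord (j + i)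

set_option maxHeartbeats 8000000 in
set_option synthInstance.maxHeartbeats 8000000 in
/-- The system `(xⱼ; xⱼ^*)_{j ≥ 0}` in `c` is total: if `y ∈ c`
satisfies `xⱼ^*(y) = 0` for all `j`, then `y = 0`. -/
theorem stmt10 (y : cSub) (h : ∀ j, cVecStar j y = 0) : y = 0 := by

  -- notation for the coordinates of `y`
  set f : ℕ → ℝ := fun k => (y : lp (fun _ : ℕ => ℝ) ∞) k with hf
  have hcoord : ∀ k, cCoord k y = f k := fun k => rfl
  have hbd : ∀ k, ‖f k‖ ≤ ‖(y : lp (fun _ : ℕ => ℝ) ∞)‖ := fun k =>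
    lp.norm_apply_le_norm ENNReal.top_ne_zero _ k
  -- summability of the scalar series
  have hgeo : Summable (fun i : ℕ => ((1 : ℝ) / 2) ^ i) :=
    summable_geometric_of_lt_one (by norm_num) (by norm_num)
  have hsum : ∀ (c : ℕ) (g : ℕ → ℕ),
      Summable (fun i : ℕ => ((1 : ℝ) / 2) ^ (i + c) * f (g i)) := by
    intro c g
    have hg1 : Summable (fun i : ℕ =>
        ((1 : ℝ) / 2) ^ (i + c) * ‖(y : lp (fun _ : ℕ => ℝ) ∞)‖) :=
      (hgeo.mul_right (((1:ℝ)/2) ^ c * ‖(y : lp (fun _ : ℕ => ℝ) ∞)‖)).congr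
        (by intro i; rw [pow_add]; ring)
    refine Summable.of_norm_bounded hg1 ?_
    intro i
    rw [norm_mul, norm_pow]
    have h1 : ‖(1 : ℝ) / 2‖ = 1 / 2 := by norm_num
    rw [h1]
    exact mul_le_mul_of_nonneg_left (hbd (g i)) (by positivity)
  -- summability of the operator-valued series
  have hcoordnorm : ∀ k, ‖cCoord k‖ ≤ 1 :=
    fun k => LinearMap.mkContinuous_norm_le _ zero_le_one _
  have hopsum : ∀ (c : ℕ) (g : ℕ → ℕ),
      Summable (fun i : ℕ => ((1 : ℝ) / 2) ^ (i + c) • cCoord (g i)) := by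
    intro c g
    have hg1 : Summable (fun i : ℕ => ((1 : ℝ) / 2) ^ (i + c)) :=
      (hgeo.mul_right (((1:ℝ)/2) ^ c)).congr (by intro i; rw [pow_add])
    refine Summable.of_norm_bounded
      (f := fun i : ℕ => ((1 : ℝ) / 2) ^ (i + c) • cCoord (g i)) hg1 ?_
    intro i
    show ‖((1 : ℝ) / 2) ^ (i + c) • cCoord (g i)‖ ≤ ((1 : ℝ) / 2) ^ (i + c)
    apply ContinuousLinearMap.opNorm_le_bound _ (by positivity)
    intro x
    rw [ContinuousLinearMap.smul_apply, norm_smul, norm_pow]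
    have h1 : ‖(1 : ℝ) / 2‖ = 1 / 2 := by norm_num
    rw [h1]
    refine mul_le_mul_of_nonneg_left ?_ (by positivity)
    calc ‖cCoord (g i) x‖ ≤ ‖cCoord (g i)‖ * ‖x‖ := (cCoord (g i)).le_opNorm x
      _ ≤ 1 * ‖x‖ :=
          mul_le_mul_of_nonneg_right (hcoordnorm _) (norm_nonneg _)
      _ = ‖x‖ := one_mul _
  -- evaluating the tsum of operators at y
  have heval : ∀ (c : ℕ) (g : ℕ → ℕ),
      (∑' i : ℕ, ((1 : ℝ) / 2) ^ (i + c) • cCoord (g i)) y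
        = ∑' i : ℕ, ((1 : ℝ) / 2) ^ (i + c) * f (g i) := by
    intro c g
    have := (ContinuousLinearMap.apply ℝ ℝ y).map_tsum (hopsum c g)
    simpa [hcoord] using this
  -- scalar form of the hypotheses
  have h0 : ∑' k : ℕ, ((1 : ℝ) / 2) ^ (k + 1) * f k = 0 := by
    have := h 0
    rw [cVecStar, if_pos rfl, heval 1 (fun k => k)] at this
    simpa using this
  have hj : ∀ m : ℕ, ((1:ℝ)/2) * f m = ∑' i : ℕ, ((1 : ℝ) / 2) ^ (i + 2) * f (m + 1 + i) := by
    intro m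
    have := h (m + 1)
    rw [cVecStar, if_neg (Nat.succ_ne_zero m)] at this
    simp only [ContinuousLinearMap.add_apply, ContinuousLinearMap.coe_smul',
      Pi.smul_apply] at this
    rw [heval 2 (fun i => m + 1 + i)] at this
    rw [hcoord] at this
    simp only [Nat.add_sub_cancel] at this
    rw [smul_eq_mul] at this
    linarith [this]
  -- shift identity forces f m = f (m+1)
  have key : ∀ m, f m = f (m + 1) := by
    intro m
    have hshift : ∑' i : ℕ, ((1 : ℝ) / 2) ^ (i + 2) * f (m + 1 + i)
        = ((1:ℝ)/2)^2 * f (m + 1)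
          + ((1:ℝ)/2) * ∑' i : ℕ, ((1 : ℝ) / 2) ^ (i + 2) * f (m + 2 + i) := by
      have hterm : ∀ b : ℕ, ((1:ℝ)/2) ^ (b + 1 + 2) * f (m + 1 + (b + 1))
          = (1/2) * (((1:ℝ)/2) ^ (b + 2) * f (m + 2 + b)) := by
        intro b
        have hb2 : m + 1 + (b + 1) = m + 2 + b := by ring
        rw [hb2]; ring
      rw [Summable.tsum_eq_zero_add (hsum 2 (fun i => m + 1 + i)), tsum_congr hterm, tsum_mul_left]
      try norm_num
    have e1 := hj m
    have e2 := hj (m + 1)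
    rw [hshift, ← e2] at e1
    norm_num at e1
    linarith [e1]
  have hconst : ∀ m, f m = f 0 := by
    intro m
    induction m with
    | zero => rfl
    | succ n ih => rw [← key n, ih]
  -- conclude f 0 = 0
  have hsum1 : ∑' k : ℕ, ((1 : ℝ) / 2) ^ (k + 1) = 1 := by
    have : ∑' k : ℕ, ((1 : ℝ) / 2) ^ (k + 1) = (1/2) * ∑' k : ℕ, ((1 : ℝ) / 2) ^ k := by
      rw [← tsum_mul_left]
      congr 1; funext k; ring
    rw [this, tsum_geometric_two]
    norm_num
  have hf0 : f 0 = 0 := by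
    have : ∑' k : ℕ, ((1 : ℝ) / 2) ^ (k + 1) * f k
        = (∑' k : ℕ, ((1 : ℝ) / 2) ^ (k + 1)) * f 0 := by
      rw [← tsum_mul_right]
      congr 1; funext k; rw [hconst k]
    rw [this, hsum1, one_mul] at h0
    exact h0
  have hzero : ∀ k, f k = 0 := fun k => by rw [hconst k, hf0]
  apply Subtype.ext
  apply lp.ext
  funext n
  simpa using hzero n
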